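/- For real x with |x+1| suitably restricted (or as formal power series), ((1+√(x+1))^(2N+1) − (1−√(x+1))^(2N+1))/(2√(x+1)) equals the sum over k from 0 to N of C(2N-k, k)·4^(N-k)·x^k. -/

import Mathlib

open Finset

open Finset

lemma choose_rec (m k : ℕ) :
    (m+2).choose (k+2) + m.choose k = m.choose (k+2) + 2 * (m+1).choose (k+1) := by
  simp [Nat.choose_succ_succ]; ring

-- termwise identity
lemma term_id (N k : ℕ) (hk : k ≤ N) (x : ℝ) :
    (Nat.choose (2*(N+2) - (k+2)) (k+2) : ℝ) * 4^(N+2-(k+2)) * x^(k+2)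
    = 4 * ((Nat.choose (2*(N+1) - (k+2)) (k+2) : ℝ) * 4^(N+1-(k+2)) * x^(k+2))
    + 2*x * ((Nat.choose (2*(N+1) - (k+1)) (k+1) : ℝ) * 4^(N+1-(k+1)) * x^(k+1))
    - x^2 * ((Nat.choose (2*N - k) k : ℝ) * 4^(N-k) * x^k) := by
  rcases eq_or_lt_of_le hk with rfl | hk
  · -- k = N
    have h1 : 2*(k+2) - (k+2) = k+2 := by omega
    have h2 : k+2 - (k+2) = 0 := by omega
    have h3 : 2*(k+1) - (k+2) = k := by omega
    have h4 : k+1 - (k+2) = 0 := by omega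
    have h5 : 2*(k+1) - (k+1) = k+1 := by omega
    have h6 : k+1 - (k+1) = 0 := by omega
    have h7 : 2*k - k = k := by omega
    have h8 : k - k = 0 := by omega
    rw [h1, h2, h3, h4, h5, h6, h7, h8]
    simp [Nat.choose_eq_zero_of_lt (by omega : k < k + 2)]
    ring
  · -- k < N
    obtain ⟨j, rfl⟩ : ∃ j, N = k + (j+1) := ⟨N - k - 1, by omega⟩
    have h1 : 2*(k+(j+1)+2) - (k+2) = (k + 2*j + 2) + 2 := by omega
    have h2 : k+(j+1)+2 - (k+2) = j + 1 := by omega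
    have h3 : 2*(k+(j+1)+1) - (k+2) = k + 2*j + 2 := by omega
    have h4 : k+(j+1)+1 - (k+2) = j := by omega
    have h5 : 2*(k+(j+1)+1) - (k+1) = (k + 2*j + 2) + 1 := by omega
    have h6 : k+(j+1)+1 - (k+1) = j+1 := by omega
    have h7 : 2*(k+(j+1)) - k = k + 2*j + 2 := by omega
    have h8 : k+(j+1) - k = j+1 := by omega
    rw [h1, h2, h3, h4, h5, h6, h7, h8]
    have hc := choose_rec (k + 2*j + 2) k
    have hc' : ((k + 2*j + 2 + 2).choose (k+2) : ℝ) + ((k + 2*j + 2).choose k : ℝ)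
        = ((k + 2*j + 2).choose (k+2) : ℝ) + 2 * ((k + 2*j + 2 + 1).choose (k+1) : ℝ) := by
      exact_mod_cast hc
    linear_combination (4:ℝ)^(j+1) * x^(k+2) * hc'

-- sum recurrence
lemma sum_rec (N : ℕ) (x : ℝ) :
    (∑ k ∈ range (N+3), (Nat.choose (2*(N+2) - k) k : ℝ) * 4^(N+2-k) * x^k)
    = (4+2*x) * (∑ k ∈ range (N+2), (Nat.choose (2*(N+1) - k) k : ℝ) * 4^(N+1-k) * x^k)
      - x^2 * (∑ k ∈ range (N+1), (Nat.choose (2*N - k) k : ℝ) * 4^(N-k) * x^k) := by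
  have hL : (∑ k ∈ range (N+3), (Nat.choose (2*(N+2) - k) k : ℝ) * 4^(N+2-k) * x^k)
      = (∑ k ∈ range (N+1), (Nat.choose (2*(N+2) - (k+2)) (k+2) : ℝ) * 4^(N+2-(k+2)) * x^(k+2))
        + (Nat.choose (2*(N+2) - 1) 1 : ℝ) * 4^(N+2-1) * x^1
        + (Nat.choose (2*(N+2)) 0 : ℝ) * 4^(N+2) * x^0 := by
    rw [Finset.sum_range_succ' _ (N+2), Finset.sum_range_succ' _ (N+1)]
    simp
  have hS1 : (∑ k ∈ range (N+2), (Nat.choose (2*(N+1) - k) k : ℝ) * 4^(N+1-k) * x^k)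
      = (∑ k ∈ range (N+1), (Nat.choose (2*(N+1) - (k+1)) (k+1) : ℝ) * 4^(N+1-(k+1)) * x^(k+1))
        + (Nat.choose (2*(N+1)) 0 : ℝ) * 4^(N+1) * x^0 := by
    rw [Finset.sum_range_succ' _ (N+1)]
    norm_num
  -- ∑_{k<N+1} g(k+2) relates to ∑_{k<N+1} g(k+1):
  have hS2 : (∑ k ∈ range (N+1), (Nat.choose (2*(N+1) - (k+1)) (k+1) : ℝ) * 4^(N+1-(k+1)) * x^(k+1))
      = (∑ k ∈ range N, (Nat.choose (2*(N+1) - (k+2)) (k+2) : ℝ) * 4^(N+1-(k+2)) * x^(k+2))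
        + (Nat.choose (2*(N+1) - 1) 1 : ℝ) * 4^(N+1-1) * x^1 := by
    rw [Finset.sum_range_succ' _ N]
  have hz : (∑ k ∈ range (N+1), (Nat.choose (2*(N+1) - (k+2)) (k+2) : ℝ) * 4^(N+1-(k+2)) * x^(k+2))
      = (∑ k ∈ range N, (Nat.choose (2*(N+1) - (k+2)) (k+2) : ℝ) * 4^(N+1-(k+2)) * x^(k+2)) := by
    rw [Finset.sum_range_succ]
    have : 2*(N+1) - (N+2) = N := by omega
    rw [this, Nat.choose_eq_zero_of_lt (by omega)]
    simp
  have hT : (∑ k ∈ range (N+1), (Nat.choose (2*(N+2) - (k+2)) (k+2) : ℝ) * 4^(N+2-(k+2)) * x^(k+2))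
      = 4 * (∑ k ∈ range (N+1), (Nat.choose (2*(N+1) - (k+2)) (k+2) : ℝ) * 4^(N+1-(k+2)) * x^(k+2))
      + 2*x * (∑ k ∈ range (N+1), (Nat.choose (2*(N+1) - (k+1)) (k+1) : ℝ) * 4^(N+1-(k+1)) * x^(k+1))
      - x^2 * (∑ k ∈ range (N+1), (Nat.choose (2*N - k) k : ℝ) * 4^(N-k) * x^k) := by
    rw [Finset.mul_sum, Finset.mul_sum, Finset.mul_sum, ← Finset.sum_add_distrib,
      ← Finset.sum_sub_distrib]
    exact Finset.sum_congr rfl fun k hk => term_id N k (by simpa using Nat.lt_succ_iff.mp (Finset.mem_range.mp hk)) x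
  rw [hL, hT, hS1, hS2, hz]
  have c1 : (Nat.choose (2*(N+2) - 1) 1 : ℝ) = 2*(N:ℝ)+3 := by
    have h : 2*(N+2) - 1 = 2*N+3 := by omega
    rw [h]; push_cast [Nat.choose_one_right]; ring
  have c2 : (Nat.choose (2*(N+1) - 1) 1 : ℝ) = 2*(N:ℝ)+1 := by
    have h : 2*(N+1) - 1 = 2*N+1 := by omega
    rw [h]; push_cast [Nat.choose_one_right]; ring
  have c3 : (N+2-1 : ℕ) = N+1 := by omega
  have c4 : (N+1-1 : ℕ) = N := by omega
  rw [c1, c2, c3, c4]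
  simp only [Nat.choose_zero_right, Nat.cast_one, pow_zero, pow_one]
  ring

lemma aux (x s : ℝ) (hs : s^2 = x+1) : ∀ N : ℕ,
    (1+s)^(2*N+1) - (1-s)^(2*N+1)
    = 2*s * ∑ k ∈ range (N+1), (Nat.choose (2*N-k) k : ℝ) * 4^(N-k) * x^k := by
  intro N
  induction N using Nat.twoStepInduction with
  | zero =>
    simp
    ring
  | one =>
    simp [Finset.sum_range_succ]
    linear_combination 2*s*hs
  | more n ih1 ih2 =>
    have ha : (1+s)^4 = (4+2*x)*(1+s)^2 - x^2 := by
      linear_combination (s^2+4*s+3-x)*hs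
    have hb : (1-s)^4 = (4+2*x)*(1-s)^2 - x^2 := by
      linear_combination (s^2-4*s+3-x)*hs
    have ih2' : (1+s)^(2*n+1)*(1+s)^2 - (1-s)^(2*n+1)*(1-s)^2
        = 2*s * ∑ k ∈ range (n+1+1), (Nat.choose (2*(n+1)-k) k : ℝ) * 4^(n+1-k) * x^k := by
      rw [← pow_add, ← pow_add, show 2*n+1+2 = 2*(n+1)+1 from by ring]
      exact ih2
    have hrec : (∑ k ∈ range (n+2+1), (Nat.choose (2*(n+2) - k) k : ℝ) * 4^(n+2-k) * x^k)
        = (4+2*x) * (∑ k ∈ range (n+1+1), (Nat.choose (2*(n+1) - k) k : ℝ) * 4^(n+1-k) * x^k)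
          - x^2 * (∑ k ∈ range (n+1), (Nat.choose (2*n - k) k : ℝ) * 4^(n-k) * x^k) :=
      sum_rec n x
    rw [show 2*(n+2)+1 = (2*n+1)+4 from by ring, pow_add, pow_add, hrec]
    linear_combination (4+2*x)*ih2' - x^2*ih1 + (1+s)^(2*n+1)*ha - (1-s)^(2*n+1)*hb

theorem sqrt_binom_identity (N : ℕ) (x : ℝ) (hx : -1 < x) :
    ((1 + Real.sqrt (x + 1)) ^ (2 * N + 1) - (1 - Real.sqrt (x + 1)) ^ (2 * N + 1))
      / (2 * Real.sqrt (x + 1))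
      = ∑ k ∈ Finset.range (N + 1),
        (Nat.choose (2 * N - k) k : ℝ) * 4 ^ (N - k) * x ^ k := by
  have hx1 : (0:ℝ) < x + 1 := by linarith
  have hs : Real.sqrt (x+1) ^ 2 = x + 1 := Real.sq_sqrt hx1.le
  have hspos : 0 < Real.sqrt (x+1) := Real.sqrt_pos.mpr hx1
  rw [div_eq_iff (by positivity), aux x (Real.sqrt (x+1)) hs N]
  ring
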